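/- For all n ≥ 0, ∑_{k=0}^n C(n,k) c_k c_{n-k} = ∑_{k=0}^n s(n,k)·S(k+2,2)/C(k+2,2), where (c_n) are the Cauchy numbers. -/

import Mathlib

open Finset

/-- Falling factorial `(θ)_n = θ(θ-1)⋯(θ-n+1)`. -/
noncomputable def fallFac (θ : ℝ) (n : ℕ) : ℝ := ∏ i ∈ Finset.range n, (θ - i)

/-- Cauchy numbers `c n = ∫_0^1 (θ)_n dθ`. -/
noncomputable def cauchy (n : ℕ) : ℝ := ∫ θ in (0:ℝ)..1, fallFac θ n

/-- Signed Stirling numbers of the first kind. -/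
noncomputable def stirlingFst (n k : ℕ) : ℝ := (descPochhammer ℝ n).coeff k

/-- Stirling numbers of the second kind. -/
def stirlingSnd : ℕ → ℕ → ℕ
  | 0, 0 => 1
  | 0, _ + 1 => 0
  | _ + 1, 0 => 0
  | n + 1, k + 1 => (k + 1) * stirlingSnd n (k + 1) + stirlingSnd n k

lemma fallFac_succ (θ : ℝ) (n : ℕ) : fallFac θ (n+1) = fallFac θ n * (θ - n) :=
  Finset.prod_range_succ _ _

lemma continuous_fallFac (n : ℕ) : Continuous (fun θ : ℝ => fallFac θ n) := by
  unfold fallFac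
  exact continuous_finset_prod _ fun i _ => by continuity

lemma fallFac_eq_eval (θ : ℝ) (n : ℕ) : fallFac θ n = (descPochhammer ℝ n).eval θ := by
  induction n with
  | zero => simp [fallFac]
  | succ m ih => rw [fallFac_succ, ih, descPochhammer_succ_eval]

lemma fallFac_eq_sum (θ : ℝ) (n : ℕ) :
    fallFac θ n = ∑ k ∈ Finset.range (n+1), stirlingFst n k * θ ^ k := by
  rw [fallFac_eq_eval, Polynomial.eval_eq_sum_range' (by rw [descPochhammer_natDegree]; exact Nat.lt_succ_self n)]
  rfl

lemma fallFac_add (x y : ℝ) : ∀ n, fallFac (x+y) n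
    = ∑ k ∈ Finset.range (n+1), (n.choose k : ℝ) * fallFac x k * fallFac y (n-k)
  | 0 => by simp [fallFac]
  | n+1 => by
    rw [fallFac_succ, fallFac_add x y n, Finset.sum_mul]
    have key : ∀ k ∈ Finset.range (n+1),
        (n.choose k : ℝ) * fallFac x k * fallFac y (n-k) * (x + y - n)
        = (n.choose k : ℝ) * fallFac x (k+1) * fallFac y (n-k)
          + (n.choose k : ℝ) * fallFac x k * fallFac y (n-k+1) := by
      intro k hk
      rw [Finset.mem_range, Nat.lt_succ_iff] at hk
      have hc : ((n - k : ℕ) : ℝ) = (n : ℝ) - k := by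
        rw [Nat.cast_sub hk]
      rw [fallFac_succ, fallFac_succ, hc]
      ring
    rw [Finset.sum_congr rfl key, Finset.sum_add_distrib]
    have hS2 : ∑ k ∈ Finset.range (n+1), (n.choose k : ℝ) * fallFac x k * fallFac y (n-k+1)
        = (∑ k ∈ Finset.range n, (n.choose (k+1) : ℝ) * fallFac x (k+1) * fallFac y (n-k))
          + fallFac y (n+1) := by
      rw [Finset.sum_range_succ' _ n]
      simp only [Nat.choose_zero_right, Nat.cast_one, one_mul]
      congr 1
      · apply Finset.sum_congr rfl
        intro k hk
        rw [Finset.mem_range] at hk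
        congr 2
        omega
      · simp [fallFac]
    have hT : ∑ k ∈ Finset.range (n+2), ((n+1).choose k : ℝ) * fallFac x k * fallFac y (n+1-k)
        = (∑ k ∈ Finset.range (n+1), (n.choose k : ℝ) * fallFac x (k+1) * fallFac y (n-k))
          + ((∑ k ∈ Finset.range (n+1), (n.choose (k+1) : ℝ) * fallFac x (k+1) * fallFac y (n-k))
             + fallFac y (n+1)) := by
      rw [Finset.sum_range_succ' _ (n+1)]
      simp only [Nat.choose_succ_succ, Nat.cast_add, Nat.succ_sub_succ, Nat.choose_zero_right,
        Nat.cast_one, one_mul, add_mul]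
      rw [Finset.sum_add_distrib]
      have : fallFac x 0 = 1 := by simp [fallFac]
      rw [this, one_mul]
      simp only [Nat.succ_eq_add_one, Nat.sub_zero]
      ring
    rw [hT, hS2, Finset.sum_range_succ
      (fun k => (n.choose (k+1) : ℝ) * fallFac x (k+1) * fallFac y (n-k)) n]
    simp [Nat.choose_succ_self]

lemma stirlingSnd_one : ∀ n, stirlingSnd (n+1) 1 = 1
  | 0 => rfl
  | n+1 => by
    show 1 * stirlingSnd (n+1) 1 + stirlingSnd (n+1) 0 = 1
    rw [stirlingSnd_one n]
    rfl

lemma stirlingSnd_two : ∀ k : ℕ, (stirlingSnd (k+2) 2 : ℝ) = 2^(k+1) - 1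
  | 0 => by norm_num [stirlingSnd]
  | k+1 => by
    show ((2 * stirlingSnd (k+2) 2 + stirlingSnd (k+2) 1 : ℕ) : ℝ) = _
    push_cast
    rw [stirlingSnd_two k, stirlingSnd_one (k+1)]
    push_cast
    ring

lemma inner1 (n : ℕ) (y : ℝ) : (∫ x in (0:ℝ)..1, fallFac (x+y) n)
    = ∑ k ∈ Finset.range (n+1), (n.choose k : ℝ) * cauchy k * fallFac y (n-k) := by
  have h : ∀ x : ℝ, fallFac (x+y) n
      = ∑ k ∈ Finset.range (n+1),
          ((n.choose k : ℝ) * fallFac y (n-k)) * fallFac x k := by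
    intro x
    rw [fallFac_add x y n]
    exact Finset.sum_congr rfl fun k _ => by ring
  rw [intervalIntegral.integral_congr (fun x _ => h x),
    intervalIntegral.integral_finset_sum (f := fun k x => (n.choose k : ℝ) * fallFac y (n-k) * fallFac x k) (fun k _ =>
      ((continuous_const.mul (continuous_fallFac k)).intervalIntegrable _ _))]
  refine Finset.sum_congr rfl fun k _ => ?_
  rw [intervalIntegral.integral_const_mul]
  unfold cauchy
  ring

lemma inner2 (n : ℕ) (y : ℝ) : (∫ x in (0:ℝ)..1, fallFac (x+y) n)
    = ∑ k ∈ Finset.range (n+1),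
        stirlingFst n k * (((1+y)^(k+1) - y^(k+1)) / ((k : ℝ)+1)) := by
  have h : ∀ x : ℝ, fallFac (x+y) n
      = ∑ k ∈ Finset.range (n+1), stirlingFst n k * (x+y) ^ k :=
    fun x => fallFac_eq_sum (x+y) n
  rw [intervalIntegral.integral_congr (fun x _ => h x),
    intervalIntegral.integral_finset_sum (f := fun k x => stirlingFst n k * (x+y) ^ k) (fun k _ =>
      ((continuous_const.mul ((continuous_add_right y).pow k)).intervalIntegrable _ _))]
  refine Finset.sum_congr rfl fun k _ => ?_
  rw [intervalIntegral.integral_const_mul,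
    intervalIntegral.integral_comp_add_right (fun t => t ^ k) y, integral_pow]
  norm_num

lemma integral_one_add_pow (m : ℕ) :
    (∫ y in (0:ℝ)..1, (1+y)^m) = ((2:ℝ)^(m+1) - 1) / ((m:ℝ)+1) := by
  rw [intervalIntegral.integral_comp_add_left (fun t => t ^ m) 1, integral_pow]
  norm_num

theorem cauchy_self_convolution_stirling (n : ℕ) :
    ∑ k ∈ Finset.range (n + 1), (n.choose k : ℝ) * cauchy k * cauchy (n - k) =
      ∑ k ∈ Finset.range (n + 1),
        stirlingFst n k * (stirlingSnd (k + 2) 2 : ℝ) / ((k + 2).choose 2 : ℝ) := by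
  have key : ∑ k ∈ Finset.range (n + 1), (n.choose k : ℝ) * cauchy k * cauchy (n - k)
      = ∫ y in (0:ℝ)..1, ∑ k ∈ Finset.range (n+1),
          stirlingFst n k * (((1+y)^(k+1) - y^(k+1)) / ((k : ℝ)+1)) := by
    rw [← intervalIntegral.integral_congr (fun y _ => (inner2 n y)),
      intervalIntegral.integral_congr (fun y _ => (inner1 n y)),
      intervalIntegral.integral_finset_sum (f := fun k x => (n.choose k : ℝ) * cauchy k * fallFac x (n-k)) (fun k _ =>
        ((continuous_const.mul (continuous_fallFac (n-k))).intervalIntegrable _ _))]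
    refine Finset.sum_congr rfl fun k _ => ?_
    rw [intervalIntegral.integral_const_mul]
    rfl
  rw [key, intervalIntegral.integral_finset_sum (fun k _ => by
    apply Continuous.intervalIntegrable
    exact continuous_const.mul ((((continuous_add_left 1).pow (k+1)).sub
      (continuous_pow (k+1))).div_const _))]
  refine Finset.sum_congr rfl fun k _ => ?_
  rw [intervalIntegral.integral_const_mul, intervalIntegral.integral_div,
    intervalIntegral.integral_sub (f := fun x => (1+x)^(k+1)) (g := fun x => x^(k+1))
      (((continuous_add_left 1).pow (k+1)).intervalIntegrable _ _)
      ((continuous_pow (k+1)).intervalIntegrable _ _),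
    integral_one_add_pow (k+1), integral_pow, stirlingSnd_two k, Nat.cast_choose_two]
  have h1 : (k:ℝ) + 1 ≠ 0 := by positivity
  have h2 : (k:ℝ) + 2 ≠ 0 := by positivity
  push_cast
  rw [one_pow, zero_pow (by omega : k+1+1 ≠ 0),
    (by ring : ((k:ℝ) + 2 - 1) = (k:ℝ)+1)]
  field_simp [h1, h2]
  ring
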